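/- Let f = z(2C(z) - 1) where C is the Catalan generating function satisfying C = 1 + zC². Then f is pseudo-involutory and its B-function is B_f = 2C, i.e., f(z) - z = z·f(z)·2·C(z·f(z)). -/

import Mathlib

open PowerSeries

/-- Composition `f ∘ g` of formal power series over `ℝ`, i.e. `f(g(z))`
(the usual composition when `g` has zero constant term). -/
noncomputable def pscomp (f g : PowerSeries ℝ) : PowerSeries ℝ :=
  PowerSeries.mk fun n => ∑ k ∈ Finset.range (n + 1), coeff k f * coeff n (g ^ k)

lemma coeff_pow_zero {g : PowerSeries ℝ} (hg : constantCoeff g = 0)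
    {n k : ℕ} (h : n < k) : coeff n (g ^ k) = 0 :=
  PowerSeries.X_pow_dvd_iff.mp (pow_dvd_pow_of_dvd (PowerSeries.X_dvd_iff.mpr hg) k) n h

lemma coeff_pscomp_eq {f g : PowerSeries ℝ} (hg : constantCoeff g = 0)
    {n N : ℕ} (h : n < N) :
    coeff n (pscomp f g) = coeff n (Polynomial.eval₂ C g (trunc N f)) := by
  obtain ⟨M, rfl⟩ : ∃ M, N = M + 1 := ⟨N - 1, by omega⟩
  rw [Polynomial.eval₂_eq_sum_range' C (natDegree_trunc_lt f M) g, map_sum]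
  rw [pscomp, coeff_mk]
  rw [Finset.sum_subset (Finset.range_subset_range.mpr (by omega : n + 1 ≤ M + 1))]
  · apply Finset.sum_congr rfl
    intro i hi
    rw [coeff_trunc, if_pos (Finset.mem_range.mp hi), coeff_C_mul]
  · intro i _ hi
    rw [coeff_pow_zero hg (by simpa using hi), mul_zero]

lemma coeff_eval₂_zero {g : PowerSeries ℝ} (hg : constantCoeff g = 0)
    {D : Polynomial ℝ} {N : ℕ} (hD : ∀ d < N, D.coeff d = 0) {n : ℕ} (h : n < N) :
    coeff n (Polynomial.eval₂ C g D) = 0 := by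
  obtain ⟨E, rfl⟩ := Polynomial.X_pow_dvd_iff.mpr hD
  rw [Polynomial.eval₂_mul, Polynomial.eval₂_X_pow]
  exact PowerSeries.X_pow_dvd_iff.mp
    (Dvd.dvd.mul_right (pow_dvd_pow_of_dvd (PowerSeries.X_dvd_iff.mpr hg) N) _) n h

lemma pscomp_mul {a b g : PowerSeries ℝ} (hg : constantCoeff g = 0) :
    pscomp (a * b) g = pscomp a g * pscomp b g := by
  ext n
  set N := n + 1 with hN
  have hn : n < N := Nat.lt_succ_self n
  have key : ∀ d < N, (trunc N a * trunc N b - trunc N (a * b)).coeff d = 0 := by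
    intro d hd
    have h1 : (trunc N a * trunc N b).coeff d
        = PowerSeries.coeff d ((trunc N a : PowerSeries ℝ) * (trunc N b : PowerSeries ℝ)) := by
      rw [← Polynomial.coe_mul, Polynomial.coeff_coe]
    have h2 : PowerSeries.coeff d ((trunc N a : PowerSeries ℝ) * (trunc N b : PowerSeries ℝ))
        = coeff d (a * b) := by
      rw [← coeff_coe_trunc_of_lt hd, trunc_trunc_mul_trunc, coeff_coe_trunc_of_lt hd]
    have h3 : (trunc N (a * b)).coeff d = coeff d (a * b) := by
      rw [← Polynomial.coeff_coe, coeff_coe_trunc_of_lt hd]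
    rw [Polynomial.coeff_sub, h1, h2, h3, sub_self]
  have hz := coeff_eval₂_zero hg key hn
  rw [Polynomial.eval₂_sub, map_sub, sub_eq_zero] at hz
  rw [coeff_pscomp_eq hg hn, ← hz, Polynomial.eval₂_mul, PowerSeries.coeff_mul,
    PowerSeries.coeff_mul]
  apply Finset.sum_congr rfl
  intro p hp
  have hp' := Finset.HasAntidiagonal.mem_antidiagonal.mp hp
  rw [coeff_pscomp_eq hg (show p.1 < N by omega), coeff_pscomp_eq hg (show p.2 < N by omega)]

lemma pscomp_add (a b g : PowerSeries ℝ) :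
    pscomp (a + b) g = pscomp a g + pscomp b g := by
  ext n
  simp [pscomp, add_mul, Finset.sum_add_distrib]

lemma pscomp_neg (a g : PowerSeries ℝ) : pscomp (-a) g = -pscomp a g := by
  ext n
  simp [pscomp, Finset.sum_neg_distrib]

lemma pscomp_one (g : PowerSeries ℝ) : pscomp 1 g = 1 := by
  ext n
  rw [pscomp, coeff_mk, Finset.sum_eq_single 0]
  · simp
  · intro i _ hi; simp [coeff_one, hi]
  · simp

lemma pscomp_X {g : PowerSeries ℝ} (hg : constantCoeff g = 0) :
    pscomp X g = g := by
  ext n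
  rw [pscomp, coeff_mk]
  rw [Finset.sum_eq_single 1]
  · simp
  · intro i hi hi1
    rw [coeff_X, if_neg hi1, zero_mul]
  · intro h
    simp only [Finset.mem_range] at h
    have : n = 0 := by omega
    subst this
    simp [hg]

lemma cat_uniq {g D E : PowerSeries ℝ} (hg : constantCoeff g = 0)
    (hD : D = 1 + g * D ^ 2) (hE : E = 1 + g * E ^ 2) : D = E := by
  have h : (1 - g * (D + E)) * (D - E) = 0 := by linear_combination hD - hE
  rcases mul_eq_zero.mp h with h1 | h2
  · exfalso
    have := congrArg (constantCoeff) h1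
    simp [hg] at this
  · exact sub_eq_zero.mp h2

lemma pscomp_cat {Cs g : PowerSeries ℝ} (hg : constantCoeff g = 0)
    (hCeq : Cs = 1 + X * Cs ^ 2) :
    pscomp Cs g = 1 + g * (pscomp Cs g) ^ 2 := by
  conv_lhs => rw [hCeq]
  rw [show (X * Cs ^ 2 : PowerSeries ℝ) = X * (Cs * Cs) by ring, pscomp_add, pscomp_one,
    pscomp_mul hg, pscomp_mul hg, pscomp_X hg]
  ring

lemma pscomp_lin {Cs g : PowerSeries ℝ} :
    pscomp (2 * Cs - 1) g = 2 * pscomp Cs g - 1 := by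
  rw [show (2 * Cs - 1 : PowerSeries ℝ) = Cs + Cs + (-1) by ring, pscomp_add, pscomp_add,
    pscomp_neg, pscomp_one]
  ring

/-- For f = z(2C - 1) with C the Catalan series (C = 1 + zC²), f is
pseudo-involutory and B_f = 2C : f(z) - z = z·f(z)·2·C(z·f(z)). -/
theorem stmt_8 (Cs : PowerSeries ℝ)
    (hC0 : constantCoeff Cs = 1) (hCeq : Cs = 1 + X * Cs ^ 2) :
    pscomp (X * (2 * Cs - 1)) (-(X * (2 * Cs - 1))) = -X ∧
      X * (2 * Cs - 1) - X =
        X * (X * (2 * Cs - 1)) * (2 * pscomp Cs (X * (X * (2 * Cs - 1)))) := by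
  have hu0 : constantCoeff (2 * Cs - 1) ≠ 0 := by
    simp [map_sub, map_mul, hC0, map_ofNat]
    norm_num
  have h1 : (2 * Cs - 1 : PowerSeries ℝ)⁻¹ * (2 * Cs - 1) = 1 :=
    PowerSeries.inv_mul_cancel _ hu0
  set I := (2 * Cs - 1 : PowerSeries ℝ)⁻¹ with hI
  have hg1 : constantCoeff (-(X * (2 * Cs - 1))) = 0 := by simp
  have hg2 : constantCoeff (X * (X * (2 * Cs - 1))) = 0 := by simp
  have hD1 : pscomp Cs (-(X * (2 * Cs - 1))) = Cs * I := by
    refine cat_uniq hg1 (pscomp_cat hg1 hCeq) ?_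
    linear_combination (I * Cs - I + 1) * h1 + (-(2 * Cs - 1) * I ^ 2) * hCeq
  have hD2 : pscomp Cs (X * (X * (2 * Cs - 1))) = Cs ^ 2 * I := by
    refine cat_uniq hg2 (pscomp_cat hg2 hCeq) ?_
    linear_combination (-Cs ^ 2 * I + (2 * Cs - 1) * I + 1) * h1 +
      ((2 * Cs - 1) * I ^ 2 * (X * Cs ^ 2 + Cs - 1)) * hCeq
  constructor
  · rw [pscomp_mul hg1, pscomp_X hg1, pscomp_lin, hD1]
    linear_combination (-2 * X * Cs) * h1
  · rw [hD2]
    linear_combination 2 * X * hCeq + (-2 * X ^ 2 * Cs ^ 2) * h1
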